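/- Let 𝒜 be a weak deterministic Büchi automaton over the alphabet Σ ∪ {⋆}, let d ≥ 1, 0 ≤ f < d, z ∈ Σ, let q be a state of 𝒜, let 𝐚 = (a₀,…,a_{d−1}) ∈ Σ^d, and let 𝐰 be an infinite word over Σ^□_f ∪ {⋆}. Then the automaton par(𝒜)^{z@f} started in state δ(q, a₀a₁⋯a_{d−1}) accepts 𝐰 if and only if the automaton 𝒜^{seq z} started in state (δ(q, a₀a₁⋯a_f), 0) accepts the word a_{f+1}⋯a_{d−1}·seq(𝐰), where seq(𝐰) is the word over Σ ∪ {□,⋆} obtained by replacing each d-tuple letter of 𝐰 by the sequence of its d components and keeping ⋆. -/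

import Mathlib

/-- A deterministic Büchi automaton over alphabet `A` with states `Q`. -/
structure DBA (A : Type) (Q : Type) where
  delta : Q → A → Q
  init : Q
  F : Set Q

namespace DBA

variable {A Q : Type}

/-- The transition function extended to finite words. -/
def deltaStar (M : DBA A Q) : Q → List A → Q
  | q, [] => q
  | q, a :: u => deltaStar M (M.delta q a) u

/-- The run of `M` on the infinite word `w`. -/
def run (M : DBA A Q) (w : ℕ → A) : ℕ → Q
  | 0 => M.init
  | n + 1 => M.delta (run M w n) (w n)

/-- `M` accepts `w` if some accepting state occurs infinitely often in the run. -/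
def Accepts (M : DBA A Q) (w : ℕ → A) : Prop :=
  ∃ q ∈ M.F, ∀ N : ℕ, ∃ n, N ≤ n ∧ run M w n = q

/-- The ω-language of `M`. -/
def Lang (M : DBA A Q) : Set (ℕ → A) := {w | M.Accepts w}

/-- `M` with initial state changed to `q`. -/
def start (M : DBA A Q) (q : Q) : DBA A Q := { M with init := q }

/-- `q'` is accessible from `q` (by a nonempty word). -/
def Reach (M : DBA A Q) (q q' : Q) : Prop :=
  ∃ u : List A, u ≠ [] ∧ deltaStar M q u = q'

/-- `M` is weak: `F` is a union of strongly connected components. -/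
def Weak (M : DBA A Q) : Prop :=
  ∀ q ∈ M.F, ∀ q', M.Reach q q' → M.Reach q' q → q' ∈ M.F

/-- `M` is minimal: distinct states recognize distinct languages. -/
def Minimal (M : DBA A Q) : Prop :=
  ∀ q q' : Q, q ≠ q' → (M.start q).Lang ≠ (M.start q').Lang

end DBA

/-- Concatenation of a finite word and an infinite word. -/
def cat {A : Type} (u : List A) (w : ℕ → A) : ℕ → A :=
  fun n => if h : n < u.length then u.get ⟨n, h⟩ else w (n - u.length)

/-- The value `⟨v⟩ = Σ_{i<|v|} v[i]·b^(|v|-1-i)` of a finite digit word. -/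
noncomputable def natVal (b : ℕ) (v : List (Fin b)) : ℝ :=
  ∑ i : Fin v.length, ((v.get i : ℕ) : ℝ) * (b : ℝ) ^ (v.length - 1 - (i : ℕ))

/-- The fractional value `⟨w⟩_f = Σ_{i≥0} w[i]·b^(-i-1)` of an infinite digit word. -/
noncomputable def fracVal (b : ℕ) (w : ℕ → Fin b) : ℝ :=
  ∑' i : ℕ, ((w i : ℕ) : ℝ) * (b : ℝ) ^ (-(i : ℤ) - 1)

/-- The word `𝐮⋆𝐰` over `Σ^d ∪ {⋆}`; `none` is the separator `⋆`. -/
def encWord {b d : ℕ} (u : List (Fin d → Fin b)) (w : ℕ → Fin d → Fin b) :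
    ℕ → Option (Fin d → Fin b) :=
  cat (u.map some ++ [none]) (fun n => some (w n))

/-- The vector of reals encoded by `𝐮⋆𝐰`. -/
noncomputable def vecVal {b d : ℕ} (u : List (Fin d → Fin b)) (w : ℕ → Fin d → Fin b) :
    Fin d → ℝ :=
  fun i => natVal b (u.map fun t => t i) + fracVal b (fun n => w n i)

/-- A language of words over `Σ^d ∪ {⋆}` is saturated if membership only depends on
the encoded vector of reals. -/
def Saturated {b d : ℕ} (L : Set (ℕ → Option (Fin d → Fin b))) : Prop :=
  ∀ (u : List (Fin d → Fin b)) (w : ℕ → Fin d → Fin b)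
    (u' : List (Fin d → Fin b)) (w' : ℕ → Fin d → Fin b),
    vecVal u w = vecVal u' w' → encWord u w ∈ L → encWord u' w' ∈ L

/-- The parallelization `par(𝒜)` of an automaton over `Σ ∪ {⋆}`. -/
def parDBA {Q : Type} {b : ℕ} (d : ℕ) (M : DBA (Option (Fin b)) Q) :
    DBA (Option (Fin d → Fin b)) Q where
  delta := fun q x =>
    match x with
    | none => M.delta q none
    | some t => M.deltaStar q (List.ofFn fun i => some (t i))
  init := M.init
  F := M.F

/-- Fill the `f`-th component of a tuple of `Σ^□_f` with the digit `z`. -/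
def fixTuple {b d : ℕ} (f : Fin d) (z : Fin b) (t : {i : Fin d // i ≠ f} → Fin b) :
    Fin d → Fin b :=
  fun i => if h : i = f then z else t ⟨i, h⟩

/-- The automaton `𝒜^{z@f}` over `Σ^□_f ∪ {⋆}`; a letter of `Σ^□_f` is represented by
its tuple of non-`f` components (the `f`-th component being `□`). -/
def fixDBA {Q : Type} {b d : ℕ} (M : DBA (Option (Fin d → Fin b)) Q) (f : Fin d) (z : Fin b) :
    DBA (Option ({i : Fin d // i ≠ f} → Fin b)) Q where
  delta := fun q x =>
    match x with
    | none => M.delta q none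
    | some t => M.delta q (some (fixTuple f z t))
  init := M.init
  F := M.F

/-- `fix_{□@f}(𝐰)`: replace the `f`-th component of every non-`⋆` letter by `□`. -/
def eraseComp {b d : ℕ} (f : Fin d) (w : ℕ → Option (Fin d → Fin b)) :
    ℕ → Option ({i : Fin d // i ≠ f} → Fin b) :=
  fun n => (w n).map fun t i => t i.val

/-- `fix_{z@f}(𝐰)`: replace the `f`-th component (`□`) of every non-`⋆` letter by `z`. -/
def fillComp {b d : ℕ} (f : Fin d) (z : Fin b) (w : ℕ → Option ({i : Fin d // i ≠ f} → Fin b)) :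
    ℕ → Option (Fin d → Fin b) :=
  fun n => (w n).map (fixTuple f z)

/-- The automaton `𝒜^{seq z}`, over alphabet `Σ ∪ {□,⋆}` (here `none` is `⋆` and
`some none` is `□`), with states `(Q × {0,…,d−1}) ∪ {⊥}` (`none` is `⊥`). -/
def seqDBA {Q : Type} {b : ℕ} (d : ℕ) (hd : 0 < d) (M : DBA (Option (Fin b)) Q) (z : Fin b) :
    DBA (Option (Option (Fin b))) (Option (Q × Fin d)) where
  delta := fun s x =>
    match s, x with
    | none, _ => none
    | some (q, i), none => some (M.delta q none, i)
    | some (q, i), some (some a) =>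
        if h : (i : ℕ) + 1 < d then some (M.delta q (some a), ⟨(i : ℕ) + 1, h⟩) else none
    | some (q, i), some none =>
        if (i : ℕ) = d - 1 then some (M.delta q (some z), ⟨0, hd⟩) else none
  init := some (M.init, ⟨0, hd⟩)
  F := {s | ∃ q ∈ M.F, ∃ i : Fin d, s = some (q, i)}

/-- Auxiliary function for flattening an infinite word of blocks:
`flatAux blk v n` is the pair (block index, offset inside the block) of position `n`. -/
def flatAux {A B : Type} (blk : A → List B) (v : ℕ → A) : ℕ → ℕ × ℕ
  | 0 => (0, 0)
  | n + 1 =>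
      let p := flatAux blk v n
      if p.2 + 1 < (blk (v p.1)).length then (p.1, p.2 + 1) else (p.1 + 1, 0)

/-- Flattening of an infinite word of (nonempty) blocks. -/
def flatten {A B : Type} [Inhabited B] (blk : A → List B) (v : ℕ → A) : ℕ → B :=
  fun n => (blk (v (flatAux blk v n).1)).getD (flatAux blk v n).2 default

/-- The block of a letter of `Σ^d ∪ {⋆}`: a `d`-tuple becomes its list of components,
`⋆` stays a single letter. -/
def parBlock {b d : ℕ} : Option (Fin d → Fin b) → List (Option (Fin b))
  | none => [none]
  | some t => List.ofFn fun i => some (t i)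

/-- `seq(𝐯)`: the sequentialization of an infinite word over `Σ^d ∪ {⋆}`. -/
def seqWord {b d : ℕ} (v : ℕ → Option (Fin d → Fin b)) : ℕ → Option (Fin b) :=
  flatten parBlock v

/-- The block of a letter of `Σ^□_f ∪ {⋆}`, as a word over `Σ ∪ {□,⋆}`. -/
def sqBlock {b d : ℕ} (f : Fin d) :
    Option ({i : Fin d // i ≠ f} → Fin b) → List (Option (Option (Fin b)))
  | none => [none]
  | some t => List.ofFn fun i : Fin d =>
      if h : i = f then some none else some (some (t ⟨i, h⟩))

/-- Number of non-`⋆` letters among the first `n` letters of `w`. -/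
def digitCount {b : ℕ} (w : ℕ → Option (Fin b)) : ℕ → ℕ
  | 0 => 0
  | n + 1 => digitCount w n + (if w n = none then 0 else 1)


namespace Stmt13Aux

open DBA

variable {A Q : Type}

/-- Iterated transition along a function of letters. -/
def iterD (M : DBA A Q) (g : ℕ → A) (q : Q) : ℕ → Q
  | 0 => q
  | k + 1 => M.delta (iterD M g q k) (g k)

lemma iterD_congr (M : DBA A Q) {g g' : ℕ → A} (q : Q) (k : ℕ)
    (h : ∀ j < k, g j = g' j) : iterD M g q k = iterD M g' q k := by
  induction k with
  | zero => rfl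
  | succ k ih =>
      simp only [iterD, ih (fun j hj => h j (by omega)), h k (by omega)]

lemma iterD_add (M : DBA A Q) (g : ℕ → A) (q : Q) (k1 k2 : ℕ) :
    iterD M g q (k1 + k2) = iterD M (fun j => g (k1 + j)) (iterD M g q k1) k2 := by
  induction k2 with
  | zero => rfl
  | succ k ih => simp only [iterD]; rw [← ih]; rfl

lemma deltaStar_append (M : DBA A Q) (q : Q) (u v : List A) :
    M.deltaStar q (u ++ v) = M.deltaStar (M.deltaStar q u) v := by
  induction u generalizing q with
  | nil => rfl
  | cons x u ih => simp only [List.cons_append, DBA.deltaStar]; exact ih (M.delta q x)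

lemma deltaStar_ofFn (M : DBA A Q) (q : Q) (k : ℕ) (g : ℕ → A) :
    M.deltaStar q (List.ofFn fun i : Fin k => g i) = iterD M g q k := by
  induction k with
  | zero => rfl
  | succ k ih =>
      rw [List.ofFn_succ']
      simp only [List.concat_eq_append, deltaStar_append, Fin.coe_castSucc, ih,
        Fin.val_last]
      rfl

lemma start_run_eq_iterD (M : DBA A Q) (s : Q) (w : ℕ → A) (n : ℕ) :
    (M.start s).run w n = iterD M w s n := by
  induction n with
  | zero => rfl
  | succ n ih => simp only [DBA.run, iterD, ih]; rfl

lemma reach_snoc (M : DBA A Q) {q1 q2 q3 : Q} (h : M.Reach q1 q2) (y : A)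
    (h2 : M.delta q2 y = q3) : M.Reach q1 q3 := by
  obtain ⟨u, hu, hd⟩ := h
  refine ⟨u ++ [y], by simp, ?_⟩
  rw [deltaStar_append, hd]
  simpa [DBA.deltaStar] using h2

lemma reach_single (M : DBA A Q) {q1 q2 : Q} (y : A) (h : M.delta q1 y = q2) :
    M.Reach q1 q2 := ⟨[y], by simp, by simpa [DBA.deltaStar] using h⟩

lemma accepts_iff_io [Fintype Q] (M : DBA A Q) (w : ℕ → A) :
    M.Accepts w ↔ ∀ N, ∃ n, N ≤ n ∧ M.run w n ∈ M.F := by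
  constructor
  · rintro ⟨q, hq, h⟩ N
    obtain ⟨n, hn, he⟩ := h N
    exact ⟨n, hn, he ▸ hq⟩
  · intro h
    by_contra hc
    simp only [DBA.Accepts] at hc
    push_neg at hc
    have hc' : ∀ q : Q, ∃ N, q ∈ M.F → ∀ n, N ≤ n → M.run w n ≠ q := by
      intro q
      by_cases hq : q ∈ M.F
      · obtain ⟨N, hN⟩ := hc q hq
        exact ⟨N, fun _ => hN⟩
      · exact ⟨0, fun h' => absurd h' hq⟩
    choose NB hNB using hc'
    obtain ⟨n, hn, hmem⟩ := h (Finset.univ.sup NB)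
    exact hNB (M.run w n) hmem n (le_trans (Finset.le_sup (Finset.mem_univ _)) hn) rfl

/-! ### Block sums and `flatAux` -/

/-- Sum of the lengths of the blocks of the first `n` letters. -/
def bS {A B : Type} (blk : A → List B) (v : ℕ → A) : ℕ → ℕ
  | 0 => 0
  | n + 1 => bS blk v n + (blk (v n)).length

section flat

variable {B C : Type} (blk : B → List C) (v : ℕ → B)
  (hlen : ∀ n, 0 < (blk (v n)).length)

lemma bS_mono : ∀ {n n' : ℕ}, n ≤ n' → bS blk v n ≤ bS blk v n' := by
  intro n n' h
  induction n' with
  | zero =>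
      have : n = 0 := by omega
      subst this; exact Nat.le_refl _
  | succ m ih =>
      rcases Nat.eq_or_lt_of_le h with h' | h'
      · exact Nat.le_of_eq (by rw [h'])
      · have := ih (by omega)
        simp only [bS]; omega

include hlen in
lemma bS_ge (n : ℕ) : n ≤ bS blk v n := by
  induction n with
  | zero => exact Nat.zero_le _
  | succ m ih => have := hlen m; simp only [bS]; omega

include hlen in
lemma flatAux_ex : ∀ m : ℕ, ∃ n j, m = bS blk v n + j ∧ j < (blk (v n)).length ∧
    flatAux blk v m = (n, j) := by
  intro m
  induction m with
  | zero => exact ⟨0, 0, by simp [bS], hlen 0, rfl⟩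
  | succ m ih =>
      obtain ⟨n, j, hm, hj, hfa⟩ := ih
      by_cases h : j + 1 < (blk (v n)).length
      · exact ⟨n, j + 1, by omega, h, by simp [flatAux, hfa, h]⟩
      · refine ⟨n + 1, 0, ?_, hlen (n + 1), by simp [flatAux, hfa, h]⟩
        simp only [bS]; omega

include hlen in
lemma flatAux_spec (n j : ℕ) (hj : j < (blk (v n)).length) :
    flatAux blk v (bS blk v n + j) = (n, j) := by
  obtain ⟨n', j', hm, hj', hfa⟩ := flatAux_ex blk v hlen (bS blk v n + j)
  have hnn : n' = n := by
    rcases Nat.lt_trichotomy n' n with h | h | h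
    · have h1 : bS blk v (n' + 1) ≤ bS blk v n := bS_mono blk v h
      simp only [bS] at h1; omega
    · exact h
    · have h1 : bS blk v (n + 1) ≤ bS blk v n' := bS_mono blk v h
      simp only [bS] at h1; omega
  subst hnn
  have : j' = j := by omega
  subst this
  exact hfa

include hlen in
lemma flatten_val [Inhabited C] (n j : ℕ) (hj : j < (blk (v n)).length) :
    flatten blk v (bS blk v n + j) = (blk (v n))[j] := by
  simp only [flatten, flatAux_spec blk v hlen n j hj]
  exact List.getD_eq_getElem _ _ hj

end flat

end Stmt13Aux


namespace Stmt13Aux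

section seq

variable {Q : Type} {b : ℕ} (M : DBA (Option (Fin b)) Q) {d : ℕ} (hd : 0 < d) (z : Fin b)

lemma seq_step {s s' : Q × Fin d} {x : Option (Option (Fin b))}
    (h : (seqDBA d hd M z).delta (some s) x = some s') :
    ∃ y, M.delta s.1 y = s'.1 := by
  obtain ⟨q, i⟩ := s; obtain ⟨q', i'⟩ := s'
  rcases x with _ | x
  · simp only [seqDBA, Option.some.injEq, Prod.mk.injEq] at h
    exact ⟨none, h.1⟩
  · rcases x with _ | a0
    · simp only [seqDBA] at h
      split at h
      · simp only [Option.some.injEq, Prod.mk.injEq] at h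
        exact ⟨some z, h.1⟩
      · exact absurd h (by simp)
    · simp only [seqDBA] at h
      split at h
      · simp only [Option.some.injEq, Prod.mk.injEq] at h
        exact ⟨some a0, h.1⟩
      · exact absurd h (by simp)

lemma seq_none_stable (W : ℕ → Option (Option (Fin b))) (s : Option (Q × Fin d)) (p k : ℕ)
    (h : iterD (seqDBA d hd M z) W s p = none) :
    iterD (seqDBA d hd M z) W s (p + k) = none := by
  induction k with
  | zero => exact h
  | succ k ih =>
      rw [show p + (k + 1) = (p + k) + 1 from rfl]
      simp only [iterD, ih]
      simp [seqDBA]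

lemma seq_reach (W : ℕ → Option (Option (Fin b))) (s : Option (Q × Fin d)) :
    ∀ (k p : ℕ) (s1 s2 : Q × Fin d),
      iterD (seqDBA d hd M z) W s p = some s1 →
      iterD (seqDBA d hd M z) W s (p + k + 1) = some s2 →
      M.Reach s1.1 s2.1 := by
  intro k
  induction k with
  | zero =>
      intro p s1 s2 h1 h2
      rw [show p + 0 + 1 = p + 1 from rfl] at h2
      simp only [iterD] at h2
      rw [h1] at h2
      obtain ⟨y, hy⟩ := seq_step M hd z h2
      exact reach_single M y hy
  | succ k ih =>
      intro p s1 s2 h1 h2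
      rcases h3 : iterD (seqDBA d hd M z) W s (p + k + 1) with _ | s3
      · have h4 := seq_none_stable M hd z W s (p + k + 1) 1 h3
        rw [show p + k + 1 + 1 = p + (k + 1) + 1 from by omega] at h4
        rw [h4] at h2
        exact absurd h2 (by simp)
      · have r1 := ih p s1 s3 h1 h3
        have h4 : iterD (seqDBA d hd M z) W s ((p + k + 1) + 1)
            = (seqDBA d hd M z).delta (iterD (seqDBA d hd M z) W s (p + k + 1))
              (W (p + k + 1)) := rfl
        rw [show p + (k + 1) + 1 = (p + k + 1) + 1 from by omega, h4, h3] at h2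
        obtain ⟨y, hy⟩ := seq_step M hd z h2
        exact reach_snoc M r1 y hy

lemma seq_iter_digits (W : ℕ → Option (Option (Fin b))) (gm : ℕ → Option (Fin b)) (qq : Q) :
    ∀ (k i : ℕ) (hik : i + k < d) (hi : i < d),
      (∀ j < k, ∃ c : Fin b, gm j = some c ∧ W j = some (some c)) →
      iterD (seqDBA d hd M z) W (some (qq, ⟨i, hi⟩)) k
        = some (iterD M gm qq k, ⟨i + k, hik⟩) := by
  intro k
  induction k with
  | zero => intro i hik hi _; rfl
  | succ k ih =>
      intro i hik hi hg
      simp only [iterD]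
      rw [ih i (by omega) hi (fun j hj => hg j (by omega))]
      obtain ⟨c, hc1, hc2⟩ := hg k (by omega)
      rw [hc2, hc1]
      simp only [seqDBA]
      rw [dif_pos (show (i + k) + 1 < d by omega)]
      rfl

end seq

end Stmt13Aux


namespace Stmt13Aux

section main

variable {Q : Type} {b : ℕ} (M : DBA (Option (Fin b)) Q) {d : ℕ} (hd : 0 < d) (f : Fin d)
  (z : Fin b) (w : ℕ → Option ({i : Fin d // i ≠ f} → Fin b))
  (W : ℕ → Option (Option (Fin b)))

include hd in
lemma sq_len_pos : ∀ n, 0 < (sqBlock f (w n)).length := by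
  intro n
  cases h : w n <;> simp [sqBlock, hd]

/-- The total-function version of the digits of the block of `t`, filled with `z`. -/
def Gt (t : {i : Fin d // i ≠ f} → Fin b) : ℕ → Option (Fin b) :=
  fun j => if h : j < d then some (fixTuple f z t ⟨j, h⟩) else none

lemma Gt_lt (t : {i : Fin d // i ≠ f} → Fin b) (j : ℕ) (h : j < d) :
    Gt f z t j = some (fixTuple f z t ⟨j, h⟩) := dif_pos h

lemma Gt_at_f (t : {i : Fin d // i ≠ f} → Fin b) : Gt f z t (f : ℕ) = some z := by
  rw [Gt_lt f z t _ f.isLt]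
  congr 1
  exact dif_pos (Fin.eta f f.isLt)

lemma fixDelta_eq (t : {i : Fin d // i ≠ f} → Fin b) (qq : Q) :
    (fixDBA (parDBA d M) f z).delta qq (some t) = iterD M (Gt f z t) qq d := by
  show (parDBA d M).delta qq (some (fixTuple f z t)) = _
  show M.deltaStar qq (List.ofFn fun i : Fin d => some (fixTuple f z t i)) = _
  rw [show (List.ofFn fun i : Fin d => some (fixTuple f z t i))
      = List.ofFn fun i : Fin d => Gt f z t (i : ℕ) from by
    congr 1
    funext i
    rw [Gt_lt f z t _ i.isLt]]
  exact deltaStar_ofFn M qq d (Gt f z t)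

lemma boundary (hW : ∀ m, W (d - 1 - (f : ℕ) + m) = flatten (sqBlock f) w m)
    (s : Option (Q × Fin d)) (q0 : Q)
    (h0 : iterD (seqDBA d hd M z) W s (d - 1 - (f : ℕ))
        = some (q0, ⟨d - 1 - (f : ℕ), by omega⟩)) :
    ∀ n, iterD (seqDBA d hd M z) W s (d - 1 - (f : ℕ) + bS (sqBlock f) w n)
      = some (iterD (fixDBA (parDBA d M) f z) w q0 n, ⟨d - 1 - (f : ℕ), by omega⟩) := by
  have hf := f.isLt
  set D := d - 1 - (f : ℕ) with hD
  intro n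
  induction n with
  | zero => simp only [bS, Nat.add_zero]; exact h0
  | succ n ih =>
      set N := seqDBA d hd M z with hN
      set qn := iterD (fixDBA (parDBA d M) f z) w q0 n with hqn
      have hrhs : iterD (fixDBA (parDBA d M) f z) w q0 (n + 1)
          = (fixDBA (parDBA d M) f z).delta qn (w n) := rfl
      rw [hrhs]
      rcases hwn : w n with _ | t
      · -- star letter
        have hb : bS (sqBlock f) w (n + 1) = bS (sqBlock f) w n + 1 := by
          simp only [bS, hwn, sqBlock, List.length_singleton]
        rw [hb, show D + (bS (sqBlock f) w n + 1) = (D + bS (sqBlock f) w n) + 1 from by omega]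
        have hstep : iterD N W s ((D + bS (sqBlock f) w n) + 1)
            = N.delta (iterD N W s (D + bS (sqBlock f) w n)) (W (D + bS (sqBlock f) w n)) := rfl
        rw [hstep, ih]
        have hWv : W (D + bS (sqBlock f) w n) = none := by
          rw [show D + bS (sqBlock f) w n = D + (bS (sqBlock f) w n + 0) from by omega,
            hW (bS (sqBlock f) w n + 0)]
          rw [flatten_val (sqBlock f) w (sq_len_pos hd f w) n 0 (by rw [hwn]; simp [sqBlock])]
          simp [hwn, sqBlock]
        rw [hWv]
        show some (M.delta qn none, _) = _
        rw [show (fixDBA (parDBA d M) f z).delta qn none = M.delta qn none from rfl]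
      · -- digit block
        have hlen : (sqBlock f (w n)).length = d := by simp [hwn, sqBlock]
        have hb : bS (sqBlock f) w (n + 1)
            = bS (sqBlock f) w n + (((f : ℕ) + 1) + D) := by
          simp only [bS]; rw [hlen]; omega
        rw [hb, show D + (bS (sqBlock f) w n + (((f : ℕ) + 1) + D))
            = ((D + bS (sqBlock f) w n) + ((f : ℕ) + 1)) + D from by omega]
        rw [iterD_add N W s ((D + bS (sqBlock f) w n) + ((f : ℕ) + 1)) D,
          iterD_add N W s (D + bS (sqBlock f) w n) ((f : ℕ) + 1)]
        rw [ih]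
        -- block letter values
        have hblock : ∀ j (hj : j < d),
            W (D + bS (sqBlock f) w n + j) = (sqBlock f (w n))[j]'(by omega) := by
          intro j hj
          rw [show D + bS (sqBlock f) w n + j = D + (bS (sqBlock f) w n + j) from by omega,
            hW (bS (sqBlock f) w n + j)]
          exact flatten_val (sqBlock f) w (sq_len_pos hd f w) n j (by omega)
        have hdig : ∀ j (hj : j < d) (hne : j ≠ (f : ℕ)),
            W (D + bS (sqBlock f) w n + j)
              = some (some (fixTuple f z t ⟨j, hj⟩)) := by
          intro j hj hne
          rw [hblock j hj]
          have hne' : (⟨j, hj⟩ : Fin d) ≠ f := by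
            intro hh
            exact hne (congrArg Fin.val hh)
          simp only [hwn, sqBlock, List.getElem_ofFn]
          rw [dif_neg hne']
          rw [show fixTuple f z t ⟨j, hj⟩ = t ⟨⟨j, hj⟩, hne'⟩ from dif_neg hne']
        -- inner segment: f digits
        have hin : iterD N (fun j => W (D + bS (sqBlock f) w n + j))
              (some (qn, ⟨D, by omega⟩)) ((f : ℕ) + 1)
            = some (M.delta (iterD M (Gt f z t) qn (f : ℕ)) (some z), ⟨0, hd⟩) := by
          have h1 : iterD N (fun j => W (D + bS (sqBlock f) w n + j))
                (some (qn, ⟨D, by omega⟩)) (f : ℕ)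
              = some (iterD M (Gt f z t) qn (f : ℕ), ⟨D + (f : ℕ), by omega⟩) := by
            refine seq_iter_digits M hd z _ (Gt f z t) qn (f : ℕ) D (by omega) (by omega) ?_
            intro j hj
            refine ⟨fixTuple f z t ⟨j, by omega⟩, Gt_lt f z t j (by omega), ?_⟩
            exact hdig j (by omega) (by omega)
          have h2 : iterD N (fun j => W (D + bS (sqBlock f) w n + j))
                (some (qn, ⟨D, by omega⟩)) ((f : ℕ) + 1)
              = N.delta (iterD N (fun j => W (D + bS (sqBlock f) w n + j))
                  (some (qn, ⟨D, by omega⟩)) (f : ℕ)) (W (D + bS (sqBlock f) w n + (f : ℕ))) := rfl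
          rw [h2, h1]
          have hWf : W (D + bS (sqBlock f) w n + (f : ℕ)) = some none := by
            rw [hblock (f : ℕ) hf]
            simp [hwn, sqBlock]
          rw [hWf]
          show (if (D + (f : ℕ)) = d - 1 then _ else _) = _
          rw [if_pos (by omega)]
        rw [hin]
        -- outer segment: D digits
        have hout : iterD N (fun j => W (D + bS (sqBlock f) w n + ((f : ℕ) + 1) + j))
              (some (M.delta (iterD M (Gt f z t) qn (f : ℕ)) (some z), ⟨0, hd⟩)) D
            = some (iterD M (fun j => Gt f z t ((f : ℕ) + 1 + j))
                (M.delta (iterD M (Gt f z t) qn (f : ℕ)) (some z)) D, ⟨0 + D, by omega⟩) := by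
          refine seq_iter_digits M hd z _ _ _ D 0 (by omega) hd ?_
          intro j hj
          refine ⟨fixTuple f z t ⟨(f : ℕ) + 1 + j, by omega⟩,
            Gt_lt f z t _ (by omega), ?_⟩
          rw [show D + bS (sqBlock f) w n + ((f : ℕ) + 1) + j
              = D + bS (sqBlock f) w n + ((f : ℕ) + 1 + j) from by omega]
          exact hdig ((f : ℕ) + 1 + j) (by omega) (by omega)
        rw [hout]
        -- right-hand side
        rw [fixDelta_eq M f z t qn]
        have hsplit : iterD M (Gt f z t) qn d
            = iterD M (fun j => Gt f z t (((f : ℕ) + 1) + j))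
                (iterD M (Gt f z t) qn ((f : ℕ) + 1)) D := by
          rw [← iterD_add]
          congr 1
          omega
        rw [hsplit]
        have hmid : iterD M (Gt f z t) qn ((f : ℕ) + 1)
            = M.delta (iterD M (Gt f z t) qn (f : ℕ)) (some z) := by
          show M.delta _ (Gt f z t (f : ℕ)) = _
          rw [Gt_at_f]
        rw [hmid]
        simp only [Option.some.injEq, Prod.mk.injEq, Fin.mk.injEq]
        exact ⟨trivial, by omega⟩

end main

end Stmt13Aux

open Stmt13Aux in
/-- relation between `par(𝒜)^{z@f}` and `𝒜^{seq z}`. -/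
theorem stmt13 {Q : Type} [Fintype Q] {b : ℕ} (hb : 2 ≤ b)
    (M : DBA (Option (Fin b)) Q) (hweak : M.Weak)
    (d : ℕ) (hd : 0 < d) (f : Fin d) (z : Fin b) (q : Q) (a : Fin d → Fin b)
    (w : ℕ → Option ({i : Fin d // i ≠ f} → Fin b)) :
    ((fixDBA (parDBA d M) f z).start
        (M.deltaStar q (List.ofFn fun i : Fin d => some (a i)))).Accepts w ↔
      ((seqDBA d hd M z).start
          (some (M.deltaStar q (List.ofFn fun i : Fin ((f : ℕ) + 1) =>
              some (a ⟨(i : ℕ), by have := i.isLt; have := f.isLt; omega⟩)), ⟨0, hd⟩))).Accepts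
        (cat
          (List.ofFn fun j : Fin (d - 1 - (f : ℕ)) =>
            some (some (a ⟨(f : ℕ) + 1 + (j : ℕ), by have := j.isLt; have := f.isLt; omega⟩)))
          (flatten (sqBlock f) w)) := by
  classical
  have hf := f.isLt
  set D := d - 1 - (f : ℕ) with hD
  set L := fixDBA (parDBA d M) f z with hLdef
  set N := seqDBA d hd M z with hNdef
  set ga : ℕ → Option (Fin b) := fun j => if h : j < d then some (a ⟨j, h⟩) else none
    with hga
  set s0 := M.deltaStar q (List.ofFn fun i : Fin d => some (a i)) with hs0def
  set q1 := M.deltaStar q (List.ofFn fun i : Fin ((f : ℕ) + 1) =>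
      some (a ⟨(i : ℕ), by have := i.isLt; have := f.isLt; omega⟩)) with hq1def
  set Wd := cat
      (List.ofFn fun j : Fin (d - 1 - (f : ℕ)) =>
        some (some (a ⟨(f : ℕ) + 1 + (j : ℕ), by have := j.isLt; have := f.isLt; omega⟩)))
      (flatten (sqBlock f) w) with hWdef
  have hlenpos := Stmt13Aux.sq_len_pos hd f w
  have hW : ∀ m, Wd (D + m) = flatten (sqBlock f) w m := by
    intro m
    rw [hWdef]
    simp only [cat, List.length_ofFn]
    rw [dif_neg (by omega)]
    congr 1
    omega
  have hW0 : ∀ j, j < D → ∀ hjd : (f : ℕ) + 1 + j < d,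
      Wd j = some (some (a ⟨(f : ℕ) + 1 + j, hjd⟩)) := by
    intro j hj hjd
    rw [hWdef]
    simp only [cat, List.length_ofFn]
    rw [dif_pos (by omega)]
    simp only [List.get_eq_getElem, List.getElem_ofFn]
  have hq1' : q1 = iterD M ga q ((f : ℕ) + 1) := by
    rw [← deltaStar_ofFn M q ((f : ℕ) + 1) ga, hq1def]
    congr 1
    congr 1
    funext i
    simp only [hga]
    rw [dif_pos (by omega)]
  have hs0' : s0 = iterD M ga q d := by
    rw [← deltaStar_ofFn M q d ga, hs0def]
    congr 1
    congr 1
    funext i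
    simp only [hga]
    rw [dif_pos (by omega)]
  have h0 : iterD N Wd (some (q1, ⟨0, hd⟩)) D = some (s0, ⟨D, by omega⟩) := by
    have hA : iterD N Wd (some (q1, ⟨0, hd⟩)) D
        = some (iterD M (fun j => ga ((f : ℕ) + 1 + j)) q1 D, ⟨0 + D, by omega⟩) := by
      refine seq_iter_digits M hd z Wd _ q1 D 0 (by omega) hd ?_
      intro j hj
      refine ⟨a ⟨(f : ℕ) + 1 + j, by omega⟩, ?_, ?_⟩
      · simp only [hga]
        rw [dif_pos (by omega)]
      · exact hW0 j hj (by omega)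
    rw [hA, hq1']
    have hsum : iterD M (fun j => ga ((f : ℕ) + 1 + j)) (iterD M ga q ((f : ℕ) + 1)) D
        = iterD M ga q d := by
      rw [← iterD_add]
      congr 1
      omega
    rw [hsum, hs0']
    simp only [Option.some.injEq, Prod.mk.injEq, Fin.mk.injEq]
    exact ⟨trivial, by omega⟩
  have hBnd := Stmt13Aux.boundary M hd f z w Wd hW (some (q1, ⟨0, hd⟩)) s0 h0
  constructor
  · rintro ⟨qs, hqsF, hio⟩
    refine (accepts_iff_io _ _).mpr ?_
    intro N0
    obtain ⟨n, hn, he⟩ := hio N0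
    have heq : iterD L w s0 n = qs := (start_run_eq_iterD _ _ w n).symm.trans he
    refine ⟨D + bS (sqBlock f) w n, ?_, ?_⟩
    · have := bS_ge (sqBlock f) w hlenpos n
      omega
    · rw [start_run_eq_iterD]
      exact ⟨qs, hqsF, ⟨D, by omega⟩, (hBnd n).trans (by rw [heq])⟩
  · rintro ⟨ss, hssF, hio⟩
    obtain ⟨qs, hqsF, is, hss⟩ := hssF
    subst hss
    refine (accepts_iff_io _ _).mpr ?_
    intro N0
    obtain ⟨p1, hp1, he1⟩ := hio N0
    have he1' : iterD N Wd (some (q1, ⟨0, hd⟩)) p1 = some (qs, is) :=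
      (start_run_eq_iterD _ _ _ _).symm.trans he1
    set n1 := p1 + 1 with hn1
    have hP1 : p1 < D + bS (sqBlock f) w n1 := by
      have := bS_ge (sqBlock f) w hlenpos n1
      omega
    obtain ⟨p2, hp2, he2⟩ := hio (D + bS (sqBlock f) w n1 + 1)
    have he2' : iterD N Wd (some (q1, ⟨0, hd⟩)) p2 = some (qs, is) :=
      (start_run_eq_iterD _ _ _ _).symm.trans he2
    have r1 : M.Reach qs (iterD L w s0 n1) := by
      refine seq_reach M hd z Wd (some (q1, ⟨0, hd⟩))
        (D + bS (sqBlock f) w n1 - p1 - 1) p1 (qs, is) (iterD L w s0 n1, ⟨D, by omega⟩)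
        he1' ?_
      rw [show p1 + (D + bS (sqBlock f) w n1 - p1 - 1) + 1 = D + bS (sqBlock f) w n1 from
        by omega]
      exact hBnd n1
    have r2 : M.Reach (iterD L w s0 n1) qs := by
      refine seq_reach M hd z Wd (some (q1, ⟨0, hd⟩))
        (p2 - (D + bS (sqBlock f) w n1) - 1) (D + bS (sqBlock f) w n1)
        (iterD L w s0 n1, ⟨D, by omega⟩) (qs, is) (hBnd n1) ?_
      rw [show D + bS (sqBlock f) w n1 + (p2 - (D + bS (sqBlock f) w n1) - 1) + 1 = p2 from
        by omega]
      exact he2'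
    have hmem : iterD L w s0 n1 ∈ M.F := hweak qs hqsF _ r1 r2
    refine ⟨n1, by omega, ?_⟩
    rw [start_run_eq_iterD]
    exact hmem
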